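/- Let κ > 0, let k ≥ 1 and n_1,…,n_k be positive integers with n = n_1+⋯+n_k, and for ω ≥ 1 define p_B(n_1,…,n_k; ω, κ) = κ^k ∫_0^∞ (u^{n−1}/Γ(n)) ( (ω + √(ω^2 − 1)) / (ω + u + √((ω+u)^2 − 1)) )^κ (u+ω)^{−n} ∏_{j=1}^k Γ(n_j) · ₂F₁( n_j/2, (n_j+1)/2; 1; 1/(u+ω)^2 ) du. Then lim_{ω→+∞} p_B(n_1,…,n_k; ω, κ) = (Γ(κ)/Γ(κ+n)) κ^k ∏_{j=1}^k Γ(n_j), the eppf of the Dirichlet process with total mass κ. -/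

import Mathlib

open MeasureTheory Set Filter Topology

/-- The Pochhammer symbol `(x)_m = Γ(x + m) / Γ(x)`. -/
noncomputable def poch (x : ℝ) (m : ℕ) : ℝ := Real.Gamma (x + m) / Real.Gamma x

/-- The Gauss hypergeometric series `₂F₁(a, b; 1; z) = Σ_m (a)_m (b)_m / ((1)_m m!) z^m`. -/
noncomputable def hyp2F1one (a b z : ℝ) : ℝ :=
  ∑' m : ℕ, (poch a m * poch b m / (poch 1 m * (Nat.factorial m : ℝ))) * z ^ m

namespace EppfAux

lemma poch_pos {x : ℝ} (hx : 0 < x) (m : ℕ) : 0 < poch x m :=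
  div_pos (Real.Gamma_pos_of_pos (by positivity)) (Real.Gamma_pos_of_pos hx)

lemma poch_zero (x : ℝ) : poch x 0 = Real.Gamma x / Real.Gamma x := by simp [poch]

lemma poch_zero_of_pos {x : ℝ} (hx : 0 < x) : poch x 0 = 1 := by
  rw [poch_zero, div_self (Real.Gamma_pos_of_pos hx).ne']

lemma poch_succ {x : ℝ} (hx : 0 < x) (m : ℕ) :
    poch x (m + 1) = poch x m * (x + m) := by
  have h : (x + ((m : ℕ) + 1 : ℕ) : ℝ) = (x + m) + 1 := by push_cast; ring
  rw [poch, h, Real.Gamma_add_one (by positivity), poch]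
  field_simp

/-- the coefficient of the hypergeometric series -/
noncomputable def coe2F1 (a b : ℝ) (m : ℕ) : ℝ :=
  poch a m * poch b m / (poch 1 m * (Nat.factorial m : ℝ))

lemma coe2F1_pos {a b : ℝ} (ha : 0 < a) (hb : 0 < b) (m : ℕ) : 0 < coe2F1 a b m := by
  have := poch_pos ha m
  have := poch_pos hb m
  have := poch_pos one_pos m
  have : (0:ℝ) < Nat.factorial m := by positivity
  unfold coe2F1; positivity

lemma coe2F1_zero {a b : ℝ} (ha : 0 < a) (hb : 0 < b) : coe2F1 a b 0 = 1 := by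
  simp [coe2F1, poch_zero_of_pos, ha, hb, poch_zero_of_pos one_pos]

lemma coe2F1_succ {a b : ℝ} (ha : 0 < a) (hb : 0 < b) (m : ℕ) :
    coe2F1 a b (m + 1) = coe2F1 a b m * ((a + m) * (b + m) / ((1 + m) * (m + 1))) := by
  have h1 : poch 1 (m+1) = poch 1 m * (1 + m) := poch_succ one_pos m
  have h2 : (Nat.factorial (m+1) : ℝ) = (Nat.factorial m : ℝ) * (m + 1) := by
    push_cast [Nat.factorial_succ]; ring
  have hp1 : (0:ℝ) < poch 1 m := poch_pos one_pos m
  have hfm : (0:ℝ) < Nat.factorial m := by positivity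
  rw [coe2F1, poch_succ ha, poch_succ hb, h1, h2, coe2F1]
  field_simp

lemma tendsto_ratio {a b : ℝ} :
    Tendsto (fun m : ℕ => (a + m) * (b + m) / ((1 + m) * (m + 1))) atTop (𝓝 1) := by
  have h1 : Tendsto (fun m : ℕ => (a + m) / (m + 1)) atTop (𝓝 1) := by
    have : ∀ m : ℕ, (a + m) / ((m:ℝ) + 1) = 1 + (a - 1) * (1 / ((m:ℝ) + 1)) := by
      intro m
      have : ((m:ℝ) + 1) ≠ 0 := by positivity
      field_simp
      ring
    simp_rw [this]
    have := tendsto_one_div_add_atTop_nhds_zero_nat.const_mul (a - 1)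
    simpa using (tendsto_const_nhds (x := (1:ℝ)) (f := atTop)).add this
  have h2 : Tendsto (fun m : ℕ => (b + m) / (m + 1)) atTop (𝓝 1) := by
    have : ∀ m : ℕ, (b + m) / ((m:ℝ) + 1) = 1 + (b - 1) * (1 / ((m:ℝ) + 1)) := by
      intro m
      have : ((m:ℝ) + 1) ≠ 0 := by positivity
      field_simp
      ring
    simp_rw [this]
    have := tendsto_one_div_add_atTop_nhds_zero_nat.const_mul (b - 1)
    simpa using (tendsto_const_nhds (x := (1:ℝ)) (f := atTop)).add this
  have key : ∀ m : ℕ, (a + m) * (b + m) / ((1 + m) * (m + 1))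
      = ((a + m) / (m + 1)) * ((b + m) / (m + 1)) := by
    intro m
    rw [div_mul_div_comm]
    ring_nf
  simp_rw [key]
  simpa using h1.mul h2

lemma summable_coe2F1 {a b z : ℝ} (ha : 0 < a) (hb : 0 < b) (hz0 : 0 ≤ z) (hz : z ≤ 1/4) :
    Summable (fun m : ℕ => coe2F1 a b m * z ^ m) := by
  -- first summability at z = 1/4
  have hq : Summable (fun m : ℕ => coe2F1 a b m * (1/4 : ℝ) ^ m) := by
    apply summable_of_ratio_norm_eventually_le (r := 1/2) (by norm_num)
    have hev : ∀ᶠ m : ℕ in atTop, (a + m) * (b + m) / ((1 + m) * (m + 1)) < 2 :=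
      tendsto_ratio.eventually_lt_const (by norm_num)
    filter_upwards [hev] with m hm
    have hpos : 0 < coe2F1 a b m := coe2F1_pos ha hb m
    have hr0 : 0 ≤ (a + m) * (b + m) / ((1 + m) * (m + 1)) := by positivity
    rw [coe2F1_succ ha hb]
    rw [Real.norm_eq_abs, Real.norm_eq_abs, abs_of_pos (by positivity),
      abs_of_pos (by positivity)]
    rw [pow_succ]
    calc coe2F1 a b m * ((a + m) * (b + m) / ((1 + m) * (m + 1))) * ((1/4:ℝ) ^ m * (1/4))
        ≤ coe2F1 a b m * 2 * ((1/4:ℝ) ^ m * (1/4)) := by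
          apply mul_le_mul_of_nonneg_right _ (by positivity)
          exact mul_le_mul_of_nonneg_left hm.le hpos.le
      _ = 1/2 * (coe2F1 a b m * (1/4:ℝ) ^ m) := by ring
  apply hq.of_nonneg_of_le
  · intro m
    exact mul_nonneg (coe2F1_pos ha hb m).le (by positivity)
  · intro m
    exact mul_le_mul_of_nonneg_left (pow_le_pow_left₀ hz0 hz m) (coe2F1_pos ha hb m).le

lemma hyp_eq_tsum (a b z : ℝ) : hyp2F1one a b z = ∑' m : ℕ, coe2F1 a b m * z ^ m := rfl

lemma hyp_one_le {a b z : ℝ} (ha : 0 < a) (hb : 0 < b) (hz0 : 0 ≤ z) (hz : z ≤ 1/4) :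
    1 ≤ hyp2F1one a b z := by
  rw [hyp_eq_tsum]
  have := Summable.le_tsum (summable_coe2F1 ha hb hz0 hz) 0
    (fun m _ => mul_nonneg (coe2F1_pos ha hb m).le (by positivity))
  simpa [coe2F1_zero ha hb] using this

lemma hyp_le {a b z : ℝ} (ha : 0 < a) (hb : 0 < b) (hz0 : 0 ≤ z) (hz : z ≤ 1/4) :
    hyp2F1one a b z ≤ hyp2F1one a b (1/4) := by
  rw [hyp_eq_tsum, hyp_eq_tsum]
  apply Summable.tsum_le_tsum _ (summable_coe2F1 ha hb hz0 hz)
    (summable_coe2F1 ha hb (by norm_num) le_rfl)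
  intro m
  exact mul_le_mul_of_nonneg_left (pow_le_pow_left₀ hz0 hz m) (coe2F1_pos ha hb m).le

lemma hyp_zero {a b : ℝ} (ha : 0 < a) (hb : 0 < b) : hyp2F1one a b 0 = 1 := by
  rw [hyp_eq_tsum]
  rw [tsum_eq_single 0 (by intro m hm; simp [zero_pow hm])]
  simp [coe2F1_zero ha hb]

lemma hyp_continuousOn {a b : ℝ} (ha : 0 < a) (hb : 0 < b) :
    ContinuousOn (hyp2F1one a b) (Icc 0 (1/4)) := by
  have : ContinuousOn (fun z : ℝ => ∑' m : ℕ, coe2F1 a b m * z ^ m) (Icc 0 (1/4)) := by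
    apply continuousOn_tsum (u := fun m => coe2F1 a b m * (1/4:ℝ) ^ m)
      (fun m => (continuous_const.mul (continuous_pow m)).continuousOn)
      (summable_coe2F1 ha hb (by norm_num) le_rfl)
    intro m x hx
    show ‖coe2F1 a b m * x ^ m‖ ≤ coe2F1 a b m * (1/4:ℝ) ^ m
    rw [Real.norm_eq_abs, abs_of_nonneg (mul_nonneg (coe2F1_pos ha hb m).le
      (pow_nonneg hx.1 m))]
    exact mul_le_mul_of_nonneg_left (pow_le_pow_left₀ hx.1 hx.2 m) (coe2F1_pos ha hb m).le
  exact this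



noncomputable def bint (m : ℕ) (s : ℝ) (v : ℝ) : ℝ := v ^ m * (1 + v) ^ (-(1 + (m:ℝ) + s))

lemma pow_mul_rpow_le (j : ℕ) (e : ℝ) {v : ℝ} (hv : 0 ≤ v) :
    v ^ j * (1 + v) ^ (e - (j:ℝ)) ≤ (1 + v) ^ e := by
  have h1 : (0:ℝ) < 1 + v := by linarith
  rw [Real.rpow_sub h1, Real.rpow_natCast]
  rw [div_eq_mul_inv]
  calc v ^ j * ((1 + v) ^ e * ((1 + v) ^ j)⁻¹)
      = (1 + v) ^ e * (v ^ j * ((1 + v) ^ j)⁻¹) := by ring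
    _ ≤ (1 + v) ^ e * 1 := by
        apply mul_le_mul_of_nonneg_left _ (Real.rpow_nonneg h1.le e)
        rw [mul_inv_le_iff₀ (by positivity), one_mul]
        exact pow_le_pow_left₀ hv (by linarith) j
    _ = (1 + v) ^ e := mul_one _

lemma bint_le {m : ℕ} {s v : ℝ} (hv : 0 ≤ v) :
    bint m s v ≤ (1 + v) ^ (-(1 + s)) := by
  have : -(1 + (m:ℝ) + s) = -(1 + s) - (m:ℝ) := by ring
  rw [bint, this]
  exact pow_mul_rpow_le m (-(1+s)) hv

lemma bint_nonneg {m : ℕ} {s v : ℝ} (hv : 0 ≤ v) : 0 ≤ bint m s v := by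
  have : (0:ℝ) < 1 + v := by linarith
  unfold bint; positivity

lemma continuousOn_one_add_rpow (e : ℝ) :
    ContinuousOn (fun v : ℝ => (1 + v) ^ e) (Ici 0) := by
  apply ContinuousOn.rpow_const (by fun_prop)
  intro x hx
  have : (0:ℝ) < 1 + x := by have := mem_Ici.mp hx; linarith
  exact Or.inl this.ne'

lemma hasDerivAt_one_add_rpow (e : ℝ) {v : ℝ} (hv : 0 ≤ v) :
    HasDerivAt (fun v : ℝ => (1 + v) ^ e) (e * (1 + v) ^ (e - 1)) v := by
  have h1 : (0:ℝ) < 1 + v := by linarith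
  have := (((hasDerivAt_id v).const_add 1).rpow_const (p := e) (Or.inl h1.ne'))
  simpa using this

lemma integrableOn_base {s : ℝ} (hs : 0 < s) :
    IntegrableOn (fun v : ℝ => (1 + v) ^ (-(1 + s))) (Ioi 0) := by
  have hderiv : ∀ x ∈ Ici (0:ℝ), HasDerivAt (fun v : ℝ => -s⁻¹ * (1 + v) ^ (-s))
      ((1 + x) ^ (-(1+s))) x := by
    intro x hx
    have h1 : (0:ℝ) < 1 + x := by have := mem_Ici.mp hx; linarith
    have := (hasDerivAt_one_add_rpow (-s) (mem_Ici.mp hx)).const_mul (-s⁻¹)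
    refine this.congr_deriv ?_
    rw [show -s - 1 = -(1+s) by ring]
    field_simp
  have htend : Tendsto (fun v : ℝ => -s⁻¹ * (1 + v) ^ (-s)) atTop (𝓝 0) := by
    have h1 : Tendsto (fun v : ℝ => (1 + v)) atTop atTop :=
      tendsto_atTop_add_const_left _ 1 tendsto_id
    have := (tendsto_rpow_neg_atTop hs).comp h1
    simpa using this.const_mul (-s⁻¹)
  exact integrableOn_Ioi_deriv_of_nonneg' hderiv
    (fun x hx => Real.rpow_nonneg (by have := mem_Ioi.mp hx; linarith) _) htend

lemma integral_base {s : ℝ} (hs : 0 < s) :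
    ∫ v in Ioi (0:ℝ), (1 + v) ^ (-(1 + s)) = s⁻¹ := by
  have hderiv : ∀ x ∈ Ici (0:ℝ), HasDerivAt (fun v : ℝ => -s⁻¹ * (1 + v) ^ (-s))
      ((1 + x) ^ (-(1+s))) x := by
    intro x hx
    have h1 : (0:ℝ) < 1 + x := by have := mem_Ici.mp hx; linarith
    have := (hasDerivAt_one_add_rpow (-s) (mem_Ici.mp hx)).const_mul (-s⁻¹)
    refine this.congr_deriv ?_
    rw [show -s - 1 = -(1+s) by ring]
    field_simp
  have htend : Tendsto (fun v : ℝ => -s⁻¹ * (1 + v) ^ (-s)) atTop (𝓝 0) := by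
    have h1 : Tendsto (fun v : ℝ => (1 + v)) atTop atTop :=
      tendsto_atTop_add_const_left _ 1 tendsto_id
    have := (tendsto_rpow_neg_atTop hs).comp h1
    simpa using this.const_mul (-s⁻¹)
  have := integral_Ioi_of_hasDerivAt_of_tendsto
    ((hderiv 0 self_mem_Ici).continuousAt.continuousWithinAt)
    (fun x hx => hderiv x (le_of_lt (mem_Ioi.mp hx))) (integrableOn_base hs) htend
  rw [this]
  simp [Real.one_rpow]

lemma bint_integrable (m : ℕ) {s : ℝ} (hs : 0 < s) :
    IntegrableOn (bint m s) (Ioi 0) := by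
  apply (integrableOn_base hs).mono' _ _
  · apply ContinuousOn.aestronglyMeasurable _ measurableSet_Ioi
    apply ContinuousOn.mul (continuous_pow m).continuousOn
    exact (continuousOn_one_add_rpow _).mono (Ioi_subset_Ici le_rfl)
  · filter_upwards [ae_restrict_mem measurableSet_Ioi] with v hv
    have hv0 : (0:ℝ) ≤ v := (mem_Ioi.mp hv).le
    rw [Real.norm_eq_abs, abs_of_nonneg (bint_nonneg hv0)]
    exact bint_le hv0

lemma bint_integral (m : ℕ) {s : ℝ} (hs : 0 < s) :
    ∫ v in Ioi (0:ℝ), bint m s v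
      = (m.factorial : ℝ) * Real.Gamma s / Real.Gamma (1 + m + s) := by
  induction m with
  | zero =>
    have h0 : ∀ v : ℝ, bint 0 s v = (1 + v) ^ (-(1 + s)) := by
      intro v; simp [bint]
    simp_rw [h0]
    rw [integral_base hs]
    rw [show (1:ℝ) + (0:ℕ) + s = s + 1 by push_cast; ring, Real.Gamma_add_one hs.ne']
    have hΓ : Real.Gamma s ≠ 0 := (Real.Gamma_pos_of_pos hs).ne'
    field_simp
    simp
  | succ m ih =>
    set p : ℝ := -(1 + (m:ℝ) + s) with hp
    -- boundary function
    set B : ℝ → ℝ := fun v => v ^ (m+1) * (1 + v) ^ p with hB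
    have hderiv : ∀ x ∈ Ici (0:ℝ), HasDerivAt B
        (((m:ℝ)+1) * bint m s x - (1 + (m:ℝ) + s) * bint (m+1) s x) x := by
      intro x hx
      have hx0 : (0:ℝ) ≤ x := mem_Ici.mp hx
      have h1 : HasDerivAt (fun v : ℝ => v ^ (m+1)) (((m:ℝ)+1) * x ^ m) x := by
        simpa using hasDerivAt_pow (m+1) x
      have h2 := hasDerivAt_one_add_rpow p hx0
      have := h1.mul h2
      refine this.congr_deriv ?_
      have e1 : (1 + x) ^ (p - 1) = (1 + x) ^ (-(1 + ((m+1:ℕ):ℝ) + s)) := by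
        congr 1; push_cast [hp]; ring
      rw [bint, bint, e1]
      push_cast
      ring
    have htendB : Tendsto B atTop (𝓝 0) := by
      apply tendsto_of_tendsto_of_tendsto_of_le_of_le'
        (tendsto_const_nhds (x := (0:ℝ))) (h := fun v => (1 + v) ^ (-s))
      · have h1 : Tendsto (fun v : ℝ => (1 + v)) atTop atTop :=
          tendsto_atTop_add_const_left _ 1 tendsto_id
        exact (tendsto_rpow_neg_atTop hs).comp h1
      · filter_upwards [eventually_ge_atTop (0:ℝ)] with v hv
        have : (0:ℝ) < 1 + v := by linarith
        rw [hB]; positivity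
      · filter_upwards [eventually_ge_atTop (0:ℝ)] with v hv
        have : p = -s - ((m+1:ℕ):ℝ) := by rw [hp]; push_cast; ring
        rw [hB, this]
        exact pow_mul_rpow_le (m+1) (-s) hv
    have hint : IntegrableOn (fun x : ℝ =>
        ((m:ℝ)+1) * bint m s x - (1 + (m:ℝ) + s) * bint (m+1) s x) (Ioi 0) :=
      ((bint_integrable m hs).const_mul _).sub ((bint_integrable (m+1) hs).const_mul _)
    have key := integral_Ioi_of_hasDerivAt_of_tendsto
      ((hderiv 0 self_mem_Ici).continuousAt.continuousWithinAt)
      (fun x hx => hderiv x (le_of_lt (mem_Ioi.mp hx))) hint htendB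
    have hB0 : B 0 = 0 := by simp [hB]
    rw [hB0, sub_zero] at key
    rw [integral_sub ((bint_integrable m hs).const_mul _)
      ((bint_integrable (m+1) hs).const_mul _), integral_const_mul, integral_const_mul, ih,
      sub_eq_zero] at key
    -- key : (m+1) * (m! Γ s / Γ (1+m+s)) = (1+m+s) * ∫ bint (m+1) s
    have hms : (0:ℝ) < 1 + (m:ℝ) + s := by positivity
    have hΓms : Real.Gamma (1 + (m:ℝ) + s) ≠ 0 := (Real.Gamma_pos_of_pos hms).ne'
    have hΓnext : Real.Gamma (1 + ((m+1:ℕ):ℝ) + s)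
        = (1 + (m:ℝ) + s) * Real.Gamma (1 + (m:ℝ) + s) := by
      rw [show (1 + ((m+1:ℕ):ℝ) + s) = (1 + (m:ℝ) + s) + 1 by push_cast; ring]
      exact Real.Gamma_add_one hms.ne'
    have hfac : ((m+1).factorial : ℝ) = ((m:ℝ) + 1) * (m.factorial : ℝ) := by
      push_cast [Nat.factorial_succ]; ring
    have hJ : (∫ v in Ioi (0:ℝ), bint (m+1) s v)
        = ((m:ℝ)+1) * ((m.factorial : ℝ) * Real.Gamma s / Real.Gamma (1 + (m:ℝ) + s))
          / (1 + (m:ℝ) + s) := by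
      rw [eq_div_iff hms.ne', mul_comm]
      exact key.symm
    rw [hJ, hΓnext, hfac]
    field_simp
end EppfAux

namespace EppfAux

lemma scale_integral (g : ℝ → ℝ) {ω : ℝ} (hω : 0 < ω) :
    ∫ x in Ioi (0:ℝ), ω * g (ω * x) = ∫ u in Ioi (0:ℝ), g u := by
  rw [integral_const_mul, integral_comp_mul_left_Ioi g 0 hω, mul_zero, smul_eq_mul,
    ← mul_assoc, mul_inv_cancel₀ hω.ne', one_mul]

end EppfAux


set_option maxHeartbeats 1000000 in
open EppfAux in
/-- As `ω → +∞`, the eppf `p_B(n_1,…,n_k; ω, κ)` of the normalized Bessel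
random measure converges to the eppf `p_D(n_1,…,n_k; κ)` of the Dirichlet process with total
mass `κ`. -/
theorem eppf_bessel_tendsto_dirichlet
    (κ : ℝ) (hκ : 0 < κ)
    (k : ℕ) (hk : 1 ≤ k) (nv : Fin k → ℕ) (hnv : ∀ j, 1 ≤ nv j)
    (n : ℕ) (hn : n = ∑ j, nv j) :
    Filter.Tendsto
      (fun ω : ℝ =>
        κ ^ k *
          ∫ u in Set.Ioi (0:ℝ),
            (u ^ (n - 1) / Real.Gamma n) *
              ((ω + Real.sqrt (ω ^ 2 - 1)) /
                  (ω + u + Real.sqrt ((ω + u) ^ 2 - 1))) ^ κ *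
              (1 / (u + ω) ^ n) *
              ∏ j, Real.Gamma (nv j) *
                hyp2F1one ((nv j : ℝ) / 2) (((nv j : ℝ) + 1) / 2) (1 / (u + ω) ^ 2))
      Filter.atTop
      (𝓝 (Real.Gamma κ / Real.Gamma (κ + n) * κ ^ k * ∏ j, Real.Gamma (nv j))) := by
  classical
  have hn1 : 1 ≤ n := by
    rw [hn]
    have j0 : Fin k := ⟨0, hk⟩
    calc 1 ≤ nv j0 := hnv j0
      _ ≤ ∑ j, nv j := Finset.single_le_sum (fun j _ => Nat.zero_le _) (Finset.mem_univ j0)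
  set p : ℕ := n - 1 with hp
  have hpn : n = p + 1 := (Nat.succ_pred_eq_of_pos hn1).symm
  have hΓn : 0 < Real.Gamma (n:ℝ) := Real.Gamma_pos_of_pos (by exact_mod_cast hn1)
  have ha : ∀ j, 0 < (nv j : ℝ) / 2 := fun j => by
    have : (1:ℝ) ≤ (nv j : ℝ) := by exact_mod_cast hnv j
    linarith
  have hb : ∀ j, 0 < ((nv j : ℝ) + 1) / 2 := fun j => by
    have : (0:ℝ) ≤ (nv j : ℝ) := Nat.cast_nonneg _
    linarith
  have hΓj : ∀ j, 0 < Real.Gamma (nv j : ℝ) := fun j =>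
    Real.Gamma_pos_of_pos (by exact_mod_cast Nat.lt_of_lt_of_le Nat.zero_lt_one (hnv j))
  set Fs : ℝ → ℝ → ℝ := fun ω v =>
    (v ^ p / ((1 + v) ^ n * Real.Gamma n)) *
      ((ω + Real.sqrt (ω ^ 2 - 1)) /
        (ω + ω * v + Real.sqrt ((ω + ω * v) ^ 2 - 1))) ^ κ *
      ∏ j, Real.Gamma (nv j) *
        hyp2F1one ((nv j : ℝ) / 2) (((nv j : ℝ) + 1) / 2) (1 / (ω * (1 + v)) ^ 2) with hFs
  set f : ℝ → ℝ := fun v =>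
    (v ^ p / ((1 + v) ^ n * Real.Gamma n)) * ((1 + v)⁻¹) ^ κ *
      ∏ j, Real.Gamma (nv j) * 1 with hf
  set bnd : ℝ → ℝ := fun v =>
    (v ^ p / ((1 + v) ^ n * Real.Gamma n)) * ((2:ℝ) ^ κ * (1 + v) ^ (-κ)) *
      ∏ j, Real.Gamma (nv j) *
        hyp2F1one ((nv j : ℝ) / 2) (((nv j : ℝ) + 1) / 2) (1/4) with hbnd
  have hz01 : ∀ ω v : ℝ, 2 ≤ ω → 0 < v →
      0 ≤ 1 / (ω * (1 + v)) ^ 2 ∧ 1 / (ω * (1 + v)) ^ 2 ≤ 1 / 4 := by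
    intro ω v hω hv
    have h2 : (2:ℝ) ≤ ω * (1 + v) := by nlinarith
    have h4 : (4:ℝ) ≤ (ω * (1 + v)) ^ 2 := by nlinarith
    have h40 : (0:ℝ) < (ω * (1 + v)) ^ 2 := by linarith
    exact ⟨by positivity, one_div_le_one_div_of_le (by norm_num) h4⟩
  have hbnd_eq : EqOn bnd
      (fun v => ((2:ℝ) ^ κ * (∏ j, Real.Gamma (nv j) *
        hyp2F1one ((nv j : ℝ) / 2) (((nv j : ℝ) + 1) / 2) (1/4)) / Real.Gamma n) *
        bint p κ v) (Ioi 0) := by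
    intro v hv
    have hv0 : (0:ℝ) < v := mem_Ioi.mp hv
    have h1v : (0:ℝ) < 1 + v := by linarith
    have hrpow : (1 + v) ^ (-(1 + (p:ℝ) + κ)) = ((1 + v) ^ n)⁻¹ * (1 + v) ^ (-κ) := by
      rw [show -(1 + (p:ℝ) + κ) = -((n:ℕ):ℝ) + (-κ) by push_cast [hpn]; ring,
        Real.rpow_add h1v, Real.rpow_neg h1v.le, Real.rpow_natCast]
    simp only [hbnd, bint, hrpow]
    field_simp [(pow_pos h1v n).ne', hΓn.ne']
  have hbnd_int : IntegrableOn bnd (Ioi 0) := by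
    apply IntegrableOn.congr_fun _ hbnd_eq.symm measurableSet_Ioi
    exact (bint_integrable p hκ).const_mul _
  have hf_val : ∫ v in Ioi (0:ℝ), f v
      = Real.Gamma κ / Real.Gamma (κ + n) * ∏ j, Real.Gamma (nv j) := by
    have hf_eq : EqOn f
        (fun v => ((∏ j, Real.Gamma (nv j)) / Real.Gamma n) * bint p κ v) (Ioi 0) := by
      intro v hv
      have hv0 : (0:ℝ) < v := mem_Ioi.mp hv
      have h1v : (0:ℝ) < 1 + v := by linarith
      have hrpow : (1 + v) ^ (-(1 + (p:ℝ) + κ)) = ((1 + v) ^ n)⁻¹ * ((1 + v)⁻¹) ^ κ := by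
        rw [Real.inv_rpow h1v.le, ← Real.rpow_neg h1v.le,
          show -(1 + (p:ℝ) + κ) = -((n:ℕ):ℝ) + (-κ) by push_cast [hpn]; ring,
          Real.rpow_add h1v, Real.rpow_neg h1v.le, Real.rpow_natCast]
      simp only [hf, bint, hrpow, mul_one]
      field_simp [(pow_pos h1v n).ne', hΓn.ne']
    rw [setIntegral_congr_fun measurableSet_Ioi hf_eq, integral_const_mul,
      bint_integral p hκ]
    have hΓfac : Real.Gamma (n:ℝ) = (p.factorial : ℝ) := by
      rw [hpn]; push_cast
      exact Real.Gamma_nat_eq_factorial p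
    have hΓarg : Real.Gamma (1 + (p:ℝ) + κ) = Real.Gamma (κ + n) := by
      congr 1; push_cast [hpn]; ring
    rw [hΓfac, hΓarg]
    have h1 : (p.factorial : ℝ) ≠ 0 := by positivity
    have h2 : Real.Gamma (κ + n) ≠ 0 := by
      have : (0:ℝ) < κ + n := by positivity
      exact (Real.Gamma_pos_of_pos this).ne'
    field_simp
  have hmain : Tendsto (fun ω : ℝ => ∫ v in Ioi (0:ℝ), Fs ω v) atTop
      (𝓝 (∫ v in Ioi (0:ℝ), f v)) := by
    apply tendsto_integral_filter_of_dominated_convergence bnd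
    · -- a.e. strong measurability
      filter_upwards [eventually_ge_atTop (2:ℝ)] with ω hω
      have hω0 : (0:ℝ) < ω := by linarith
      apply ContinuousOn.aestronglyMeasurable _ measurableSet_Ioi
      simp only [hFs]
      apply ContinuousOn.mul
      apply ContinuousOn.mul
      · apply ContinuousOn.div (by fun_prop) (by fun_prop)
        intro v hv
        have hv0 : (0:ℝ) < v := mem_Ioi.mp hv
        have h1v : (0:ℝ) < 1 + v := by linarith
        exact (mul_pos (pow_pos h1v n) hΓn).ne'
      · apply ContinuousOn.rpow_const
        · apply ContinuousOn.div (by fun_prop) (by fun_prop)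
          intro v hv
          have hv0 : (0:ℝ) < v := mem_Ioi.mp hv
          exact ne_of_gt (by nlinarith [Real.sqrt_nonneg ((ω + ω * v) ^ 2 - 1)])
        · exact fun v _ => Or.inr hκ.le
      · apply continuousOn_finset_prod
        intro j _
        apply ContinuousOn.mul continuousOn_const
        have hcont := hyp_continuousOn (ha j) (hb j)
        have hzcont : ContinuousOn (fun v : ℝ => 1 / (ω * (1 + v)) ^ 2) (Ioi 0) := by
          apply ContinuousOn.div continuousOn_const (by fun_prop)
          intro v hv
          have hv0 : (0:ℝ) < v := mem_Ioi.mp hv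
          have hpos : (0:ℝ) < ω * (1 + v) := by nlinarith
          exact pow_ne_zero 2 hpos.ne'
        exact hcont.comp hzcont fun v hv =>
          ⟨(hz01 ω v hω (mem_Ioi.mp hv)).1, (hz01 ω v hω (mem_Ioi.mp hv)).2⟩
    · -- domination
      filter_upwards [eventually_ge_atTop (2:ℝ)] with ω hω
      rw [ae_restrict_iff' measurableSet_Ioi]
      filter_upwards with v hv
      have hv0 : (0:ℝ) < v := mem_Ioi.mp hv
      have h1v : (0:ℝ) < 1 + v := by linarith
      have hω0 : (0:ℝ) < ω := by linarith
      set R : ℝ := (ω + Real.sqrt (ω ^ 2 - 1)) /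
        (ω + ω * v + Real.sqrt ((ω + ω * v) ^ 2 - 1)) with hR
      have hden : (0:ℝ) < ω + ω * v + Real.sqrt ((ω + ω * v) ^ 2 - 1) := by
        have := Real.sqrt_nonneg ((ω + ω * v) ^ 2 - 1)
        nlinarith
      have hR0 : 0 ≤ R := by
        apply div_nonneg _ hden.le
        have := Real.sqrt_nonneg (ω ^ 2 - 1)
        linarith
      have hR2 : R ≤ 2 / (1 + v) := by
        have hnum : ω + Real.sqrt (ω ^ 2 - 1) ≤ 2 * ω := by
          have h1 : Real.sqrt (ω ^ 2 - 1) ≤ Real.sqrt (ω ^ 2) :=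
            Real.sqrt_le_sqrt (by nlinarith)
          rw [Real.sqrt_sq hω0.le] at h1
          linarith
        have hden2 : ω * (1 + v) ≤ ω + ω * v + Real.sqrt ((ω + ω * v) ^ 2 - 1) := by
          have := Real.sqrt_nonneg ((ω + ω * v) ^ 2 - 1)
          nlinarith
        calc R ≤ 2 * ω / (ω * (1 + v)) :=
              div_le_div₀ (by positivity) hnum (by positivity) hden2
          _ = 2 / (1 + v) := by
              rw [mul_comm 2 ω, mul_div_mul_left _ _ hω0.ne']
      have hRκ : R ^ κ ≤ 2 ^ κ * (1 + v) ^ (-κ) := by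
        calc R ^ κ ≤ (2 / (1 + v)) ^ κ := Real.rpow_le_rpow hR0 hR2 hκ.le
          _ = 2 ^ κ * (1 + v) ^ (-κ) := by
              rw [Real.div_rpow (by norm_num) h1v.le, Real.rpow_neg h1v.le, div_eq_mul_inv]
      have hz := hz01 ω v hω hv0
      have hA : (0:ℝ) ≤ v ^ p / ((1 + v) ^ n * Real.Gamma n) :=
        div_nonneg (pow_nonneg hv0.le p) (mul_nonneg (pow_nonneg h1v.le n) hΓn.le)
      have hprod_le : (∏ j, Real.Gamma (nv j) *
          hyp2F1one ((nv j : ℝ) / 2) (((nv j : ℝ) + 1) / 2) (1 / (ω * (1 + v)) ^ 2))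
          ≤ ∏ j, Real.Gamma (nv j) *
          hyp2F1one ((nv j : ℝ) / 2) (((nv j : ℝ) + 1) / 2) (1/4) := by
        apply Finset.prod_le_prod
        · intro j _
          exact mul_nonneg (hΓj j).le
            (le_trans zero_le_one (hyp_one_le (ha j) (hb j) hz.1 hz.2))
        · intro j _
          exact mul_le_mul_of_nonneg_left (hyp_le (ha j) (hb j) hz.1 hz.2) (hΓj j).le
      have hprod0 : (0:ℝ) ≤ ∏ j, Real.Gamma (nv j) *
          hyp2F1one ((nv j : ℝ) / 2) (((nv j : ℝ) + 1) / 2) (1 / (ω * (1 + v)) ^ 2) :=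
        Finset.prod_nonneg fun j _ => mul_nonneg (hΓj j).le
          (le_trans zero_le_one (hyp_one_le (ha j) (hb j) hz.1 hz.2))
      have hFs0 : 0 ≤ Fs ω v := by
        simp only [hFs, ← hR]
        exact mul_nonneg (mul_nonneg hA (Real.rpow_nonneg hR0 κ)) hprod0
      rw [Real.norm_eq_abs, abs_of_nonneg hFs0]
      simp only [hFs, hbnd, ← hR]
      refine mul_le_mul (mul_le_mul_of_nonneg_left hRκ hA) hprod_le hprod0 ?_
      exact mul_nonneg hA (mul_nonneg (Real.rpow_nonneg (by norm_num) κ)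
        (Real.rpow_nonneg h1v.le (-κ)))
    · exact hbnd_int
    · -- pointwise limit
      rw [ae_restrict_iff' measurableSet_Ioi]
      filter_upwards with v hv
      have hv0 : (0:ℝ) < v := mem_Ioi.mp hv
      have h1v : (0:ℝ) < 1 + v := by linarith
      have htendR : Tendsto (fun ω : ℝ => (ω + Real.sqrt (ω ^ 2 - 1)) /
          (ω + ω * v + Real.sqrt ((ω + ω * v) ^ 2 - 1))) atTop (𝓝 ((1 + v)⁻¹)) := by
        have heq : ∀ᶠ ω : ℝ in atTop,
            (1 + Real.sqrt (1 - (ω⁻¹) ^ 2)) /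
              ((1 + v) + Real.sqrt ((1 + v) ^ 2 - (ω⁻¹) ^ 2))
            = (ω + Real.sqrt (ω ^ 2 - 1)) /
              (ω + ω * v + Real.sqrt ((ω + ω * v) ^ 2 - 1)) := by
          filter_upwards [eventually_ge_atTop (1:ℝ)] with ω hω
          have hω0 : (0:ℝ) < ω := by linarith
          have s1 : ω * Real.sqrt (1 - (ω⁻¹) ^ 2) = Real.sqrt (ω ^ 2 - 1) := by
            rw [show ω ^ 2 - 1 = ω ^ 2 * (1 - (ω⁻¹) ^ 2) by field_simp,
              Real.sqrt_mul (by positivity) _, Real.sqrt_sq hω0.le]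
          have s2 : ω * Real.sqrt ((1 + v) ^ 2 - (ω⁻¹) ^ 2)
              = Real.sqrt ((ω + ω * v) ^ 2 - 1) := by
            rw [show (ω + ω * v) ^ 2 - 1 = ω ^ 2 * ((1 + v) ^ 2 - (ω⁻¹) ^ 2) by
                field_simp,
              Real.sqrt_mul (by positivity) _, Real.sqrt_sq hω0.le]
          have e1 : ω * (1 + Real.sqrt (1 - (ω⁻¹) ^ 2)) = ω + Real.sqrt (ω ^ 2 - 1) := by
            rw [← s1]; ring
          have e2 : ω * ((1 + v) + Real.sqrt ((1 + v) ^ 2 - (ω⁻¹) ^ 2))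
              = ω + ω * v + Real.sqrt ((ω + ω * v) ^ 2 - 1) := by
            rw [← s2]; ring
          rw [← e1, ← e2, mul_div_mul_left _ _ hω0.ne']
        apply Tendsto.congr' heq
        have hinv : Tendsto (fun ω : ℝ => (ω⁻¹) ^ 2) atTop (𝓝 0) := by
          have := ((tendsto_inv_atTop_zero : Tendsto (fun r : ℝ => r⁻¹) atTop (𝓝 0)).pow 2)
          simpa using this
        have hnum : Tendsto (fun ω : ℝ => 1 + Real.sqrt (1 - (ω⁻¹) ^ 2)) atTop (𝓝 2) := by
          have h1 : Tendsto (fun ω : ℝ => 1 - (ω⁻¹) ^ 2) atTop (𝓝 1) := by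
            simpa using tendsto_const_nhds.sub hinv
          have h2 := (Real.continuous_sqrt.tendsto 1).comp h1
          simp only [Real.sqrt_one] at h2
          have h3 : Tendsto (fun ω : ℝ => 1 + Real.sqrt (1 - (ω⁻¹) ^ 2)) atTop
              (𝓝 (1 + 1)) := Tendsto.const_add 1 h2
          norm_num [inv_pow] at h3 ⊢
          exact h3
        have hden : Tendsto (fun ω : ℝ => (1 + v) + Real.sqrt ((1 + v) ^ 2 - (ω⁻¹) ^ 2))
            atTop (𝓝 ((1 + v) + (1 + v))) := by
          have h1 : Tendsto (fun ω : ℝ => (1 + v) ^ 2 - (ω⁻¹) ^ 2) atTop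
              (𝓝 ((1 + v) ^ 2)) := by
            simpa using tendsto_const_nhds.sub hinv
          have h2 := (Real.continuous_sqrt.tendsto ((1 + v) ^ 2)).comp h1
          rw [Real.sqrt_sq h1v.le] at h2
          exact tendsto_const_nhds.add h2
        have hlim := hnum.div hden (by linarith)
        have hval : (2:ℝ) / ((1 + v) + (1 + v)) = (1 + v)⁻¹ := by
          have hne : (1 + v) + (1 + v) ≠ 0 := by positivity
          field_simp
          ring
        rwa [hval] at hlim
      have htendRκ := htendR.rpow_const (Or.inr hκ.le)
      have htendz : Tendsto (fun ω : ℝ => 1 / (ω * (1 + v)) ^ 2) atTop (𝓝 0) := by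
        simp_rw [one_div]
        apply Tendsto.comp tendsto_inv_atTop_zero
        exact (tendsto_pow_atTop two_ne_zero).comp (Tendsto.atTop_mul_const h1v tendsto_id)
      have htendhyp : ∀ j : Fin k, Tendsto (fun ω : ℝ =>
          hyp2F1one ((nv j : ℝ) / 2) (((nv j : ℝ) + 1) / 2) (1 / (ω * (1 + v)) ^ 2))
          atTop (𝓝 1) := by
        intro j
        have hcw : Tendsto (hyp2F1one ((nv j : ℝ) / 2) (((nv j : ℝ) + 1) / 2))
            (𝓝[Icc (0:ℝ) (1/4)] 0)
            (𝓝 (hyp2F1one ((nv j : ℝ) / 2) (((nv j : ℝ) + 1) / 2) 0)) :=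
          hyp_continuousOn (ha j) (hb j) 0 (by norm_num)
        have hmem : ∀ᶠ ω : ℝ in atTop, 1 / (ω * (1 + v)) ^ 2 ∈ Icc (0:ℝ) (1/4) := by
          filter_upwards [eventually_ge_atTop (2:ℝ)] with ω hω
          exact ⟨(hz01 ω v hω hv0).1, (hz01 ω v hω hv0).2⟩
        have hzin : Tendsto (fun ω : ℝ => 1 / (ω * (1 + v)) ^ 2) atTop
            (𝓝[Icc (0:ℝ) (1/4)] 0) := tendsto_nhdsWithin_iff.mpr ⟨htendz, hmem⟩
        have := hcw.comp hzin
        rwa [hyp_zero (ha j) (hb j)] at this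
      have htendP : Tendsto (fun ω : ℝ => ∏ j, Real.Gamma (nv j) *
          hyp2F1one ((nv j : ℝ) / 2) (((nv j : ℝ) + 1) / 2) (1 / (ω * (1 + v)) ^ 2))
          atTop (𝓝 (∏ j, Real.Gamma (nv j) * 1)) := by
        apply tendsto_finset_prod
        intro j _
        exact tendsto_const_nhds.mul (htendhyp j)
      simp only [hFs, hf]
      exact (tendsto_const_nhds.mul htendRκ).mul htendP
  have hmain2 : Tendsto (fun ω : ℝ => κ ^ k * ∫ v in Ioi (0:ℝ), Fs ω v) atTop
      (𝓝 (Real.Gamma κ / Real.Gamma (κ + n) * κ ^ k * ∏ j, Real.Gamma (nv j))) := by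
    have h := hmain.const_mul (κ ^ k)
    rw [hf_val] at h
    convert h using 2
    ring
  apply Tendsto.congr' _ hmain2
  filter_upwards [eventually_ge_atTop (2:ℝ)] with ω hω
  have hω0 : (0:ℝ) < ω := by linarith
  congr 1
  conv_rhs => rw [← scale_integral _ hω0]
  apply setIntegral_congr_fun measurableSet_Ioi
  intro x hx
  have hx0 : (0:ℝ) < x := mem_Ioi.mp hx
  have h1x : (0:ℝ) < 1 + x := by linarith
  simp only [hFs]
  have harg : ω * x + ω = ω * (1 + x) := by ring
  rw [harg, mul_pow ω x p, mul_pow ω (1 + x) n]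
  have hωn : ω ^ n = ω * ω ^ p := by rw [hpn, pow_succ]; ring
  rw [hωn]
  field_simp [(pow_pos h1x n).ne', hΓn.ne']
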